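/- Let n > 2 and let v ∈ ℝⁿ be a nonzero vector. Then the strict inverted Cauchy–Schwarz inequality η(v,v)·η(w,w) < η(v,w)² holds for every w ∈ ℝⁿ that is linearly independent of v (i.e. w ∉ span{v}) if and only if v is timelike (η(v,v) > 0). -/

import Mathlib

noncomputable section

/-- The Minkowski bilinear form on `ℝⁿ`:
`η(v,w) = v₀ w₀ − ∑_{i≠0} vᵢ wᵢ`. -/
def eta {n : ℕ} [NeZero n] (v w : Fin n → ℝ) : ℝ :=
  v 0 * w 0 - ∑ i ∈ Finset.univ.erase 0, v i * w i

end

section aux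

variable {n : ℕ} [NeZero n]

lemma eta_sub_smul_right (v w : Fin n → ℝ) (t : ℝ) :
    eta v (w - t • v) = eta v w - t * eta v v := by
  simp only [eta, Pi.sub_apply, Pi.smul_apply, smul_eq_mul]
  have : ∀ i ∈ Finset.univ.erase (0 : Fin n),
      v i * (w i - t * v i) = v i * w i - t * (v i * v i) := by
    intro i _; ring
  rw [Finset.sum_congr rfl this, Finset.sum_sub_distrib, ← Finset.mul_sum]
  ring

lemma eta_expand (v w : Fin n → ℝ) (t : ℝ) :
    eta (w - t • v) (w - t • v) = eta w w - 2 * t * eta v w + t ^ 2 * eta v v := by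
  simp only [eta, Pi.sub_apply, Pi.smul_apply, smul_eq_mul]
  have : ∀ i ∈ Finset.univ.erase (0 : Fin n),
      (w i - t * v i) * (w i - t * v i)
        = (w i * w i - 2 * t * (v i * w i)) + t ^ 2 * (v i * v i) := by
    intro i _; ring
  rw [Finset.sum_congr rfl this, Finset.sum_add_distrib, Finset.sum_sub_distrib,
    ← Finset.mul_sum, ← Finset.mul_sum]
  ring

/-- A nonzero vector η-orthogonal to a timelike vector is spacelike. -/
lemma eta_neg_of_ortho (v u : Fin n → ℝ) (hvv : 0 < eta v v)
    (ho : eta v u = 0) (hu : u ≠ 0) : eta u u < 0 := by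
  set s := Finset.univ.erase (0 : Fin n) with hs
  have hSvv : v 0 * v 0 - ∑ i ∈ s, v i * v i = eta v v := rfl
  have hcs := Finset.sum_mul_sq_le_sq_mul_sq s v u
  have hsq : ∀ f : Fin n → ℝ, ∑ i ∈ s, f i ^ 2 = ∑ i ∈ s, f i * f i := by
    intro f; apply Finset.sum_congr rfl; intro i _; ring
  rw [hsq, hsq] at hcs
  have hvnn : (0:ℝ) ≤ ∑ i ∈ s, v i * v i :=
    Finset.sum_nonneg fun i _ => mul_self_nonneg _
  have hunn : (0:ℝ) ≤ ∑ i ∈ s, u i * u i :=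
    Finset.sum_nonneg fun i _ => mul_self_nonneg _
  have hv0 : v 0 ≠ 0 := by
    intro h
    rw [eta, h] at hvv
    nlinarith
  by_cases hSuu : ∑ i ∈ s, u i * u i = 0
  · -- then all spatial coords of u vanish, so u 0 = 0 too, contradiction
    have hall : ∀ i ∈ s, u i * u i = 0 :=
      (Finset.sum_eq_zero_iff_of_nonneg fun i _ => mul_self_nonneg _).1 hSuu
    have hu0 : u 0 = 0 := by
      have : eta v u = v 0 * u 0 - ∑ i ∈ s, v i * u i := rfl
      have hz : ∑ i ∈ s, v i * u i = 0 := by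
        apply Finset.sum_eq_zero
        intro i hi
        have := hall i hi
        have : u i = 0 := by nlinarith
        simp [this]
      rw [this, hz] at ho
      have hmul : v 0 * u 0 = 0 := by linarith
      exact (mul_eq_zero.1 hmul).resolve_left hv0
    exfalso
    apply hu
    funext k
    by_cases hk : k = 0
    · rw [hk]; exact hu0
    · have hk' : k ∈ s := Finset.mem_erase.2 ⟨hk, Finset.mem_univ _⟩
      have := hall k hk'
      have hz : u k = 0 := by nlinarith
      simpa using hz
  · have hSuu' : 0 < ∑ i ∈ s, u i * u i := lt_of_le_of_ne hunn (Ne.symm hSuu)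
    have h1 : eta v v = v 0 * v 0 - ∑ i ∈ s, v i * v i := rfl
    have h2 : eta v u = v 0 * u 0 - ∑ i ∈ s, v i * u i := rfl
    have h3 : eta u u = u 0 * u 0 - ∑ i ∈ s, u i * u i := rfl
    rw [h2] at ho
    rw [h1] at hvv
    rw [h3]
    have ha2 : 0 < v 0 * v 0 := mul_self_pos.2 hv0
    have hvu : ∑ i ∈ s, v i * u i = v 0 * u 0 := by linarith
    rw [hvu] at hcs
    have h5 : (∑ i ∈ s, v i * v i) * (∑ i ∈ s, u i * u i)
        < (v 0 * v 0) * ∑ i ∈ s, u i * u i := by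
      apply mul_lt_mul_of_pos_right _ hSuu'
      linarith
    have h6 : u 0 * u 0 < ∑ i ∈ s, u i * u i := by nlinarith
    linarith

end aux

/-- The strict inverted Cauchy–Schwarz inequality
`η(v,v) η(w,w) < η(v,w)²` holds for all `w` linearly independent of `v`
iff `v` is timelike (for `n > 2`). -/
theorem strict_inverted_cauchy_schwarz_iff_timelike {n : ℕ} [NeZero n]
    (hn : 2 < n) (v : Fin n → ℝ) (hv : v ≠ 0) :
    (∀ w : Fin n → ℝ, w ∉ Submodule.span ℝ {v} →
      eta v v * eta w w < (eta v w) ^ 2) ↔ 0 < eta v v := by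
  constructor
  · -- forward: contrapositive
    intro h
    by_contra hle
    push_neg at hle
    set s := Finset.univ.erase (0 : Fin n) with hs
    -- some spatial coordinate of v is nonzero
    have hvv : eta v v = v 0 * v 0 - ∑ i ∈ s, v i * v i := rfl
    obtain ⟨i, hi, hvi⟩ : ∃ i ∈ s, v i ≠ 0 := by
      by_contra hc
      push_neg at hc
      have hz : ∑ i ∈ s, v i * v i = 0 :=
        Finset.sum_eq_zero fun i hi => by rw [hc i hi]; ring
      rw [hvv, hz] at hle
      have hv0 : v 0 = 0 := by nlinarith
      apply hv
      funext k
      by_cases hk : k = 0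
      · rw [hk]; exact hv0
      · exact hc k (Finset.mem_erase.2 ⟨hk, Finset.mem_univ _⟩)
    have hi0 : i ≠ 0 := (Finset.mem_erase.1 hi).1
    -- pick j ≠ 0, j ≠ i
    set j1 : Fin n := ⟨1, by omega⟩ with hj1
    set j2 : Fin n := ⟨2, by omega⟩ with hj2
    have h0 : (0 : Fin n) = ⟨0, Nat.pos_of_ne_zero (NeZero.ne n)⟩ := rfl
    set j : Fin n := if i = j1 then j2 else j1 with hj
    have hj0 : j ≠ 0 := by
      rw [hj]
      split <;> (intro hc; rw [h0] at hc; simp [hj1, hj2, Fin.ext_iff] at hc)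
    have hji : j ≠ i := by
      rw [hj]
      split
      · rename_i hcase; rw [hcase]; intro hc
        simp [hj1, hj2, Fin.ext_iff] at hc
      · rename_i hcase; exact fun hc => hcase hc.symm
    -- counterexample w
    set w : Fin n → ℝ := fun k => if k = j then v i else if k = i then -(v j) else 0 with hw
    have hwj : w j = v i := by simp [hw]
    have hwi : w i = -(v j) := by simp [hw, Ne.symm hji]
    have hw0 : w 0 = 0 := by simp [hw, (Ne.symm hj0), (Ne.symm hi0)]
    have hsub : ({j, i} : Finset (Fin n)) ⊆ s := by
      intro k hk
      simp only [Finset.mem_insert, Finset.mem_singleton] at hk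
      rcases hk with rfl | rfl
      · exact Finset.mem_erase.2 ⟨hj0, Finset.mem_univ _⟩
      · exact Finset.mem_erase.2 ⟨hi0, Finset.mem_univ _⟩
    have hsum : ∀ f : Fin n → ℝ, ∑ k ∈ s, f k * w k = f j * w j + f i * w i := by
      intro f
      rw [← Finset.sum_subset hsub]
      · rw [Finset.sum_pair hji]
      · intro k _ hk
        simp only [Finset.mem_insert, Finset.mem_singleton, not_or] at hk
        have : w k = 0 := by simp [hw, hk.1, hk.2]
        rw [this, mul_zero]
    have hetavw : eta v w = 0 := by
      have : eta v w = v 0 * w 0 - ∑ k ∈ s, v k * w k := rfl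
      rw [this, hsum v, hwj, hwi, hw0]; ring
    have hetaww : eta w w < 0 := by
      have : eta w w = w 0 * w 0 - ∑ k ∈ s, w k * w k := rfl
      rw [this, hsum w, hwj, hwi, hw0]
      nlinarith [mul_self_pos.2 hvi, mul_self_nonneg (v j)]
    have hwspan : w ∉ Submodule.span ℝ {v} := by
      intro hmem
      obtain ⟨c, hc⟩ := Submodule.mem_span_singleton.1 hmem
      have hcj : c * v j = v i := by
        have := congrFun hc j; simpa [hwj] using this
      have hci : c * v i = -(v j) := by
        have := congrFun hc i; simpa [hwi] using this
      have hzero : (1 + c * c) * v i = 0 := by linear_combination c * hci - hcj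
      rcases mul_eq_zero.1 hzero with h1 | h1
      · nlinarith [mul_self_nonneg c]
      · exact hvi h1
    have := h w hwspan
    rw [hetavw] at this
    nlinarith [mul_nonneg (neg_nonneg.2 hle) (neg_nonneg.2 hetaww.le)]
  · -- backward: timelike ⇒ reverse Cauchy–Schwarz
    intro hvv w hwspan
    set t : ℝ := eta v w / eta v v with ht
    set u : Fin n → ℝ := w - t • v with hu
    have hune : u ≠ 0 := by
      intro hc
      apply hwspan
      have : w = t • v := by
        have := sub_eq_zero.1 hc
        exact this
      rw [this]
      exact Submodule.smul_mem _ _ (Submodule.mem_span_singleton_self v)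
    have hortho : eta v u = 0 := by
      rw [hu, eta_sub_smul_right, ht]
      field_simp
      ring
    have hneg : eta u u < 0 := eta_neg_of_ortho v u hvv hortho hune
    have hexp : eta u u = eta w w - 2 * t * eta v w + t ^ 2 * eta v v := eta_expand v w t
    rw [hexp] at hneg
    have hne : eta v v ≠ 0 := ne_of_gt hvv
    have ht' : t * eta v v = eta v w := div_mul_cancel₀ _ hne
    have h2 : eta v v * (eta w w - 2 * t * eta v w + t ^ 2 * eta v v) < 0 :=
      mul_neg_of_pos_of_neg hvv hneg
    have e1 : t * eta v w * eta v v = eta v w ^ 2 := by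
      rw [mul_comm t (eta v w), mul_assoc, ht']; ring
    have e2 : t ^ 2 * eta v v * eta v v = eta v w ^ 2 := by
      have h3 : t ^ 2 * eta v v * eta v v = (t * eta v v) ^ 2 := by ring
      rw [h3, ht']
    nlinarith [h2, e1, e2]
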